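/- Let (m_k) be positive reals with ∑ m_k = ∞ and m_k → 0, and let S_0 = 0, S_{k+1} = S_k + m_k. There exists a function F : ℝ → ℝ that is differentiable with locally Lipschitz derivative, bounded below, and satisfies F(S_k) = S_k/2 and F'(S_k) = −1 for all k. Consequently, the gradient descent iterates x_0 = 0, x_{k+1} = x_k − m_k F'(x_k) satisfy x_k = S_k for all k; hence x_k → ∞, F(x_k) → ∞, and |F'(x_k)| = 1 for all k. -/

import Mathlib

open Filter

open Filter Set intervalIntegral
open scoped Classical

noncomputable def Sd (m : ℕ → ℝ) (k : ℕ) : ℝ := ∑ j ∈ Finset.range k, m j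

noncomputable def qd (m : ℕ → ℝ) (k : ℕ) (x : ℝ) : ℝ :=
  -1 + 9 * ((x - Sd m k) * (Sd m (k + 1) - x)) / (m k) ^ 2

noncomputable def Gd (m : ℕ → ℝ) (x : ℝ) : ℝ :=
  if h : 0 < x ∧ ∃ k, x ≤ Sd m (k + 1) then qd m (Nat.find h.2) x else -1

variable {m : ℕ → ℝ}

lemma Sd_zero : Sd m 0 = 0 := by simp [Sd]

lemma Sd_succ (k : ℕ) : Sd m (k + 1) = Sd m k + m k := Finset.sum_range_succ _ _

lemma Sd_mono (hpos : ∀ k, 0 < m k) : StrictMono (Sd m) :=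
  strictMono_nat_of_lt_succ fun k => by rw [Sd_succ]; linarith [hpos k]

lemma Sd_nonneg (hpos : ∀ k, 0 < m k) (k : ℕ) : 0 ≤ Sd m k := by
  have := (Sd_mono hpos).monotone (Nat.zero_le k)
  rwa [Sd_zero] at this

lemma Gd_nonpos (hx : x ≤ 0) : Gd m x = -1 := by
  rw [Gd, dif_neg]; exact fun h => absurd h.1 (not_lt.2 hx)

lemma Gd_eq (hpos : ∀ k, 0 < m k) {k : ℕ} {x : ℝ} (h1 : Sd m k < x)
    (h2 : x ≤ Sd m (k + 1)) : Gd m x = qd m k x := by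
  have hx : 0 < x := lt_of_le_of_lt (Sd_nonneg hpos k) h1
  have h : 0 < x ∧ ∃ k, x ≤ Sd m (k + 1) := ⟨hx, k, h2⟩
  rw [Gd, dif_pos h]
  congr 2
  rw [Nat.find_eq_iff]
  refine ⟨h2, fun j hj => not_le.2 (lt_of_le_of_lt ?_ h1)⟩
  exact (Sd_mono hpos).monotone (Nat.succ_le_of_lt hj)

lemma qd_left (k : ℕ) : qd m k (Sd m k) = -1 := by simp [qd]

lemma qd_right (k : ℕ) : qd m k (Sd m (k + 1)) = -1 := by simp [qd]

lemma Gd_S (hpos : ∀ k, 0 < m k) (k : ℕ) : Gd m (Sd m k) = -1 := by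
  cases k with
  | zero => rw [Sd_zero]; exact Gd_nonpos le_rfl
  | succ j => rw [Gd_eq hpos (Sd_mono hpos (Nat.lt_succ_self j)) le_rfl, qd_right]

lemma Gd_on (hpos : ∀ k, 0 < m k) {k : ℕ} {x : ℝ}
    (hx : x ∈ Icc (Sd m k) (Sd m (k + 1))) : Gd m x = qd m k x := by
  rcases eq_or_lt_of_le hx.1 with h | h
  · rw [← h, Gd_S hpos, qd_left]
  · exact Gd_eq hpos h hx.2

lemma qd_ge (hpos : ∀ k, 0 < m k) {k : ℕ} {x : ℝ}
    (hx : x ∈ Icc (Sd m k) (Sd m (k + 1))) : -1 ≤ qd m k x := by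
  rw [qd]
  have : 0 ≤ 9 * ((x - Sd m k) * (Sd m (k + 1) - x)) / (m k) ^ 2 := by
    apply div_nonneg _ (sq_nonneg _)
    have := hx.1; have := hx.2
    nlinarith
  linarith

lemma qd_cont (k : ℕ) : Continuous (qd m k) := by
  unfold qd; fun_prop

lemma qd_lip (hpos : ∀ k, 0 < m k) {k : ℕ} {x y : ℝ}
    (hx : x ∈ Icc (Sd m k) (Sd m (k + 1))) (hy : y ∈ Icc (Sd m k) (Sd m (k + 1))) :
    |qd m k x - qd m k y| ≤ (9 / m k) * |x - y| := by
  have hmk := hpos k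
  have hmk' : (m k) ≠ 0 := hmk.ne'
  set a := Sd m k
  set b := Sd m (k + 1)
  have hb : b = a + m k := Sd_succ k
  have key : qd m k x - qd m k y = 9 * (x - y) * (a + b - x - y) / (m k) ^ 2 := by
    rw [qd, qd]; field_simp; ring
  rw [key, abs_div, abs_mul, abs_mul]
  have h1 : |a + b - x - y| ≤ m k := by
    rw [abs_le]
    constructor <;> [skip; skip] <;>
      · have := hx.1; have := hx.2; have := hy.1; have := hy.2
        rw [hb] at *; linarith
  have h9 : |(9 : ℝ)| = 9 := by norm_num
  have hsq : |(m k) ^ 2| = (m k) ^ 2 := abs_of_nonneg (sq_nonneg _)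
  rw [h9, hsq]
  rw [div_le_iff₀ (by positivity)]
  have hxy : 0 ≤ |x - y| := abs_nonneg _
  calc 9 * |x - y| * |a + b - x - y| ≤ 9 * |x - y| * m k := by nlinarith
    _ = 9 / m k * |x - y| * (m k) ^ 2 := by field_simp

lemma Gd_lip_aux (hpos : ∀ k, 0 < m k) (n : ℕ) :
    ∃ L : ℝ, 0 ≤ L ∧ ∀ x ≤ Sd m n, ∀ y ≤ Sd m n, |Gd m x - Gd m y| ≤ L * |x - y| := by
  induction n with
  | zero =>
    refine ⟨0, le_rfl, fun x hx y hy => ?_⟩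
    rw [Sd_zero] at hx hy
    rw [Gd_nonpos hx, Gd_nonpos hy]
    simp
  | succ n ih =>
    obtain ⟨L, hL0, hL⟩ := ih
    have hm := hpos n
    have h9 : (0:ℝ) ≤ 9 / m n := by positivity
    refine ⟨max L (9 / m n), le_trans hL0 (le_max_left _ _), ?_⟩
    have hmid : ∀ x ∈ Icc (Sd m n) (Sd m (n + 1)), ∀ y ∈ Icc (Sd m n) (Sd m (n + 1)),
        |Gd m x - Gd m y| ≤ max L (9 / m n) * |x - y| := by
      intro x hx y hy
      rw [Gd_on hpos hx, Gd_on hpos hy]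
      calc |qd m n x - qd m n y| ≤ (9 / m n) * |x - y| := qd_lip hpos hx hy
        _ ≤ max L (9 / m n) * |x - y| :=
          mul_le_mul_of_nonneg_right (le_max_right _ _) (abs_nonneg _)
    have hlow : ∀ x ≤ Sd m n, ∀ y ≤ Sd m n,
        |Gd m x - Gd m y| ≤ max L (9 / m n) * |x - y| := fun x hx y hy =>
      le_trans (hL x hx y hy) (mul_le_mul_of_nonneg_right (le_max_left _ _) (abs_nonneg _))
    have hcross : ∀ x ≤ Sd m n, ∀ y ∈ Icc (Sd m n) (Sd m (n + 1)),
        |Gd m x - Gd m y| ≤ max L (9 / m n) * |x - y| := by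
      intro x hx y hy
      have hSn : Sd m n ∈ Icc (Sd m n) (Sd m (n + 1)) :=
        ⟨le_rfl, (Sd_mono hpos (Nat.lt_succ_self n)).le⟩
      have t1 := hlow x hx (Sd m n) le_rfl
      have t2 := hmid (Sd m n) hSn y hy
      have e1 : |x - Sd m n| = Sd m n - x := by rw [abs_sub_comm, abs_of_nonneg]; linarith
      have e2 : |Sd m n - y| = y - Sd m n := by rw [abs_sub_comm, abs_of_nonneg (by linarith [hy.1])]
      have e3 : |x - y| = y - x := by rw [abs_sub_comm, abs_of_nonneg (by linarith [hy.1])]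
      rw [e1] at t1; rw [e2] at t2; rw [e3]
      calc |Gd m x - Gd m y| ≤ |Gd m x - Gd m (Sd m n)| + |Gd m (Sd m n) - Gd m y| :=
            abs_sub_le _ _ _
        _ ≤ max L (9 / m n) * (Sd m n - x) + max L (9 / m n) * (y - Sd m n) := by
            exact add_le_add t1 t2
        _ = max L (9 / m n) * (y - x) := by ring
    intro x hx y hy
    rcases le_total x (Sd m n) with h1 | h1 <;> rcases le_total y (Sd m n) with h2 | h2
    · exact hlow x h1 y h2
    · exact hcross x h1 y ⟨h2, hy⟩
    · rw [abs_sub_comm (Gd m x), abs_sub_comm x]; exact hcross y h2 x ⟨h1, hx⟩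
    · exact hmid x ⟨h1, hx⟩ y ⟨h2, hy⟩

lemma Gd_cont (hpos : ∀ k, 0 < m k) (hex : ∀ x : ℝ, ∃ n, x < Sd m n) :
    Continuous (Gd m) := by
  rw [continuous_iff_continuousAt]
  intro x
  obtain ⟨n, hn⟩ := hex x
  obtain ⟨L, hL0, hL⟩ := Gd_lip_aux hpos n
  have hlip : LipschitzOnWith (Real.toNNReal L) (Gd m) (Iic (Sd m n)) := by
    rw [lipschitzOnWith_iff_dist_le_mul]
    intro a ha b hb
    rw [Real.dist_eq, Real.dist_eq, Real.coe_toNNReal _ hL0]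
    exact hL a ha b hb
  exact hlip.continuousOn.continuousAt (Iic_mem_nhds hn)

lemma qd_hasDeriv (hpos : ∀ k, 0 < m k) (k : ℕ) (x : ℝ) :
    HasDerivAt (fun x => -x + (9 / (m k) ^ 2) *
      ((Sd m k + Sd m (k + 1)) * x ^ 2 / 2 - x ^ 3 / 3 - Sd m k * Sd m (k + 1) * x))
      (qd m k x) x := by
  have hmk : m k ≠ 0 := (hpos k).ne'
  set a := Sd m k
  set b := Sd m (k + 1)
  set c := 9 / (m k) ^ 2
  have h2 : HasDerivAt (fun x : ℝ => x ^ 2) (2 * x) x := by simpa using hasDerivAt_pow 2 x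
  have h3 : HasDerivAt (fun x : ℝ => x ^ 3) (3 * x ^ 2) x := by simpa using hasDerivAt_pow 3 x
  have hid : HasDerivAt (fun x : ℝ => x) 1 x := hasDerivAt_id x
  have H : HasDerivAt (fun x => -x + c *
      ((a + b) * x ^ 2 / 2 - x ^ 3 / 3 - a * b * x))
      (-1 + c * ((a + b) * (2 * x) / 2 - 3 * x ^ 2 / 3 - a * b * 1)) x := by
    exact hid.neg.add (HasDerivAt.const_mul c
      ((((h2.const_mul (a + b)).div_const 2).sub (h3.div_const 3)).sub
        (hid.const_mul (a * b))))
  convert H using 1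
  rw [qd]
  show -1 + 9 * ((x - a) * (b - x)) / (m k) ^ 2 =
    -1 + c * ((a + b) * (2 * x) / 2 - 3 * x ^ 2 / 3 - a * b * 1)
  unfold c
  ring

lemma qd_integral (hpos : ∀ k, 0 < m k) (k : ℕ) :
    ∫ x in Sd m k..Sd m (k + 1), qd m k x = m k / 2 := by
  have hmk : m k ≠ 0 := (hpos k).ne'
  rw [integral_eq_sub_of_hasDerivAt (fun x _ => qd_hasDeriv hpos k x)
    ((qd_cont k).intervalIntegrable _ _)]
  rw [Sd_succ k]
  field_simp
  ring


/-- Divergence example: given positive step sizes `m_k` with `∑ m_k = ∞` and `m_k → 0`,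
and partial sums `S_0 = 0`, `S_{k+1} = S_k + m_k`, there is a function `F : ℝ → ℝ`,
differentiable with locally Lipschitz derivative and bounded below, with
`F(S_k) = S_k/2` and `F'(S_k) = −1` for all `k`; consequently the gradient descent
iterates `x_0 = 0`, `x_{k+1} = x_k − m_k F'(x_k)` satisfy `x_k = S_k`, hence
`x_k → ∞`, `F(x_k) → ∞`, and `|F'(x_k)| = 1` for all `k`. -/
theorem divergence_example (m : ℕ → ℝ) (hpos : ∀ k, 0 < m k)
    (hdiv : Tendsto (fun n => ∑ j ∈ Finset.range n, m j) atTop atTop)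
    (hto0 : Tendsto m atTop (nhds 0))
    (S : ℕ → ℝ) (hS : ∀ k, S k = ∑ j ∈ Finset.range k, m j) :
    ∃ F F' : ℝ → ℝ,
      (∀ x : ℝ, HasDerivAt F (F' x) x) ∧
      (∀ K : Set ℝ, IsCompact K →
        ∃ L : ℝ, 0 ≤ L ∧ ∀ x ∈ K, ∀ y ∈ K, |F' x - F' y| ≤ L * |x - y|) ∧
      (∃ B : ℝ, ∀ x, B ≤ F x) ∧
      (∀ k, F (S k) = S k / 2) ∧
      (∀ k, F' (S k) = -1) ∧
      (∀ x : ℕ → ℝ, x 0 = 0 → (∀ k, x (k + 1) = x k - m k * F' (x k)) →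
        (∀ k, x k = S k) ∧
        Tendsto x atTop atTop ∧
        Tendsto (fun k => F (x k)) atTop atTop ∧
        (∀ k, |F' (x k)| = 1)) := by
  have hS' : ∀ k, S k = Sd m k := hS
  have hSd_div : Tendsto (Sd m) atTop atTop := hdiv
  have hex : ∀ x : ℝ, ∃ n, x < Sd m n := fun x =>
    (hSd_div.eventually (eventually_gt_atTop x)).exists
  have hGc : Continuous (Gd m) := Gd_cont hpos hex
  set F : ℝ → ℝ := fun x => ∫ t in (0:ℝ)..x, Gd m t with hF
  have hderiv : ∀ x, HasDerivAt F (Gd m x) x := fun x =>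
    (hGc.integral_hasStrictDerivAt 0 x).hasDerivAt
  have hint : ∀ a b : ℝ, IntervalIntegrable (Gd m) MeasureTheory.volume a b := fun a b =>
    hGc.intervalIntegrable a b
  have hFS : ∀ k, F (Sd m k) = Sd m k / 2 := by
    intro k
    induction k with
    | zero => rw [Sd_zero]; simp [hF]
    | succ k ih =>
      have hle : Sd m k ≤ Sd m (k + 1) := (Sd_mono hpos (Nat.lt_succ_self k)).le
      have hadd : (∫ t in (0:ℝ)..Sd m k, Gd m t) + ∫ t in Sd m k..Sd m (k + 1), Gd m t
          = ∫ t in (0:ℝ)..Sd m (k + 1), Gd m t :=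
        integral_add_adjacent_intervals (hint _ _) (hint _ _)
      have hcong : (∫ t in Sd m k..Sd m (k + 1), Gd m t)
          = ∫ t in Sd m k..Sd m (k + 1), qd m k t := by
        apply intervalIntegral.integral_congr
        intro t ht
        rw [uIcc_of_le hle] at ht
        exact Gd_on hpos ht
      have : F (Sd m (k + 1)) = F (Sd m k) + ∫ t in Sd m k..Sd m (k + 1), Gd m t := by
        rw [hF]; exact hadd.symm
      rw [this, hcong, qd_integral hpos k, ih, Sd_succ]; ring
  obtain ⟨M, hM⟩ : ∃ M, ∀ k, m k ≤ M := by
    obtain ⟨M, hM⟩ := hto0.bddAbove_range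
    exact ⟨M, fun k => hM ⟨k, rfl⟩⟩
  have hM0 : 0 < M := lt_of_lt_of_le (hpos 0) (hM 0)
  have hlb : ∀ x, -M ≤ F x := by
    intro x
    rcases le_or_gt x 0 with hx | hx
    · have hcong : F x = ∫ t in (0:ℝ)..x, (-1 : ℝ) := by
        apply intervalIntegral.integral_congr
        intro t ht
        rw [uIcc_of_ge hx] at ht
        exact Gd_nonpos ht.2
      rw [hcong, intervalIntegral.integral_const]
      simp only [smul_eq_mul, sub_zero]
      nlinarith
    · have hexx : ∃ k, x ≤ Sd m (k + 1) := by
        obtain ⟨n, hn⟩ := hex x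
        exact ⟨n, le_trans hn.le ((Sd_mono hpos).monotone (Nat.le_succ n))⟩
      set k := Nat.find hexx with hk
      have hk2 : x ≤ Sd m (k + 1) := Nat.find_spec hexx
      have hk1 : Sd m k < x := by
        cases hkc : k with
        | zero => rw [Sd_zero]; exact hx
        | succ j =>
          have := Nat.find_min hexx (by omega : j < k)
          exact not_le.1 this
      have hsub : ∀ t ∈ Icc (Sd m k) x, t ∈ Icc (Sd m k) (Sd m (k + 1)) :=
        fun t ht => ⟨ht.1, le_trans ht.2 hk2⟩
      have hcong : (∫ t in Sd m k..x, Gd m t) = ∫ t in Sd m k..x, qd m k t := by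
        apply intervalIntegral.integral_congr
        intro t ht
        rw [uIcc_of_le hk1.le] at ht
        exact Gd_on hpos (hsub t ht)
      have hmono : (∫ t in Sd m k..x, (-1 : ℝ)) ≤ ∫ t in Sd m k..x, qd m k t := by
        apply intervalIntegral.integral_mono_on hk1.le
          (intervalIntegrable_const) ((qd_cont k).intervalIntegrable _ _)
        exact fun t ht => qd_ge hpos (hsub t ht)
      have hconst : (∫ t in Sd m k..x, (-1 : ℝ)) = -(x - Sd m k) := by
        rw [intervalIntegral.integral_const]; simp
      have hFx : F x = F (Sd m k) + ∫ t in Sd m k..x, Gd m t := by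
        rw [hF]; exact (integral_add_adjacent_intervals (hint _ _) (hint _ _)).symm
      have hSnn : 0 ≤ Sd m k := Sd_nonneg hpos k
      have hSucc : Sd m (k + 1) = Sd m k + m k := Sd_succ k
      have hmM : m k ≤ M := hM k
      rw [hFx, hcong, hFS k]
      have : -(x - Sd m k) ≤ ∫ t in Sd m k..x, qd m k t := hconst ▸ hmono
      nlinarith [this]
  refine ⟨F, Gd m, hderiv, ?_, ⟨-M, hlb⟩, ?_, ?_, ?_⟩
  · intro K hK
    obtain ⟨r, hr⟩ := hK.isBounded.subset_closedBall 0
    obtain ⟨n, hn⟩ := hex r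
    obtain ⟨L, hL0, hL⟩ := Gd_lip_aux hpos n
    refine ⟨L, hL0, fun x hxK y hyK => hL x ?_ y ?_⟩
    · have := hr hxK
      rw [Metric.mem_closedBall, Real.dist_eq, sub_zero] at this
      exact le_trans (le_trans (le_abs_self x) this) hn.le
    · have := hr hyK
      rw [Metric.mem_closedBall, Real.dist_eq, sub_zero] at this
      exact le_trans (le_trans (le_abs_self y) this) hn.le
  · intro k; rw [hS']; exact hFS k
  · intro k; rw [hS']; exact Gd_S hpos k
  · intro x hx0 hxrec
    have hxk : ∀ k, x k = S k := by
      intro k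
      induction k with
      | zero => rw [hx0, hS]; simp
      | succ k ih =>
        rw [hxrec, ih, hS' k, Gd_S hpos k, hS' (k + 1), Sd_succ]; ring
    refine ⟨hxk, ?_, ?_, ?_⟩
    · have hTS : Tendsto S atTop atTop := hdiv.congr fun n => (hS n).symm
      exact hTS.congr fun k => (hxk k).symm
    · have : Tendsto (fun k => Sd m k / 2) atTop atTop :=
        hSd_div.atTop_div_const two_pos
      apply this.congr
      intro k
      rw [← hFS k, ← hS' k, ← hxk k]
    · intro k
      rw [hxk k, hS' k, Gd_S hpos k]
      norm_num
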